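/- Let μ be a Borel probability measure on [0,∞) such that the function λ ↦ log λ is μ-integrable. Then the function s ↦ s/(1+s²) − ∫ 1/(λ+s) dμ(λ) is Lebesgue integrable on (0,∞), and ∫₀^∞ ( s/(1+s²) − ∫ 1/(λ+s) dμ(λ) ) ds = ∫ log λ dμ(λ). -/

import Mathlib

open MeasureTheory Set

section TreeEntropyAux
open Filter Real

lemma ptbound (lam s : ℝ) (hl : 0 < lam) (hs : 0 < s) :
    |s / (1 + s ^ 2) - 1 / (lam + s)| ≤ (lam + lam⁻¹) * (1 + s ^ 2)⁻¹ := by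
  have h2 : (0:ℝ) < 1 + s ^ 2 := by positivity
  have h3 : 0 < lam + s := by linarith
  have key : s / (1 + s ^ 2) - 1 / (lam + s) = (lam*s - 1) / ((1 + s ^ 2) * (lam + s)) := by
    field_simp; ring
  rw [key, abs_div, abs_of_pos (by positivity : (0:ℝ) < (1 + s ^ 2) * (lam + s)),
    div_le_iff₀ (by positivity)]
  have habs : |lam*s - 1| ≤ lam*s + 1 := by
    have := abs_sub (lam*s) 1
    calc |lam*s - 1| ≤ |lam*s| + |1| := abs_sub _ _
      _ = lam*s + 1 := by rw [abs_of_pos (by positivity), abs_one]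
  have hinv : lam * lam⁻¹ = 1 := mul_inv_cancel₀ hl.ne'
  calc |lam*s - 1| ≤ lam*s + 1 := habs
    _ ≤ (lam + lam⁻¹) * (1 + s ^ 2)⁻¹ * ((1 + s ^ 2) * (lam + s)) := by
        have h4 : (lam + lam⁻¹) * (1 + s ^ 2)⁻¹ * ((1 + s ^ 2) * (lam + s))
            = (lam + lam⁻¹) * (lam + s) := by
          field_simp
        rw [h4]
        have h5 : 0 < lam⁻¹ := by positivity
        nlinarith [mul_pos hl hs, mul_pos h5 hs, sq_nonneg lam]

lemma aux_integrable (lam : ℝ) (hl : 0 < lam) :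
    IntegrableOn (fun s : ℝ => s / (1 + s ^ 2) - 1 / (lam + s)) (Ioi 0) volume := by
  apply Integrable.mono' ((integrable_inv_one_add_sq.const_mul (lam + lam⁻¹)).integrableOn)
  · apply Measurable.aestronglyMeasurable
    fun_prop
  · rw [ae_restrict_iff' measurableSet_Ioi]
    filter_upwards with s hs
    rw [Real.norm_eq_abs]
    exact ptbound lam s hl hs


lemma aux_deriv (lam : ℝ) (hl : 0 < lam) (s : ℝ) (hs : 0 ≤ s) :
    HasDerivAt (fun s : ℝ => (1/2) * Real.log (1 + s^2) - Real.log (lam + s))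
      (s / (1 + s ^ 2) - 1 / (lam + s)) s := by
  have h2 : (0:ℝ) < 1 + s ^ 2 := by positivity
  have h3 : 0 < lam + s := by linarith
  have d1 : HasDerivAt (fun s : ℝ => 1 + s^2) (2*s) s := by
    simpa using ((hasDerivAt_pow 2 s).const_add 1)
  have d2 : HasDerivAt (fun s : ℝ => lam + s) 1 s := by
    simpa using ((hasDerivAt_id s).const_add lam)
  have := ((d1.log h2.ne').const_mul (1/2:ℝ)).sub (d2.log h3.ne')
  refine this.congr_deriv ?_
  ring

lemma aux_value (lam : ℝ) (hl : 0 < lam) :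
    ∫ s in Ioi (0:ℝ), (s / (1 + s ^ 2) - 1 / (lam + s)) = Real.log lam := by
  have htend : Tendsto (fun s : ℝ => (1/2) * Real.log (1 + s^2) - Real.log (lam + s))
      atTop (nhds 0) := by
    have h0 : Tendsto (fun s : ℝ => s⁻¹) atTop (nhds 0) := tendsto_inv_atTop_zero
    set g : ℝ → ℝ := fun x => (x^2 + 1)/((lam*x+1)^2) with hgdef
    have hg : ContinuousAt g 0 := by
      apply ContinuousAt.div
      · fun_prop
      · fun_prop
      · norm_num
    have h1 : Tendsto (fun s : ℝ => g s⁻¹) atTop (nhds 1) := by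
      have := hg.tendsto.comp h0
      have hg0 : g 0 = 1 := by simp [hgdef]
      rw [hg0] at this
      exact this
    have h2 : Tendsto (fun s : ℝ => (1/2) * Real.log (g s⁻¹)) atTop (nhds 0) := by
      have := ((Real.continuousAt_log one_ne_zero).tendsto.comp h1).const_mul (1/2:ℝ)
      simpa using this
    apply h2.congr'
    filter_upwards [eventually_gt_atTop (0:ℝ)] with s hs
    have h3 : (0:ℝ) < lam + s := by linarith
    have hs' : s ≠ 0 := hs.ne'
    have e3 : g s⁻¹ = (1+s^2)/(lam+s)^2 := by
      simp only [hgdef]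
      rw [div_eq_div_iff (by positivity) (by positivity)]
      field_simp
    rw [e3, Real.log_div (by positivity) (by positivity), Real.log_pow]
    push_cast
    ring
  have := integral_Ioi_of_hasDerivAt_of_tendsto
    (f := fun s : ℝ => (1/2) * Real.log (1 + s^2) - Real.log (lam + s))
    (f' := fun s : ℝ => s / (1 + s ^ 2) - 1 / (lam + s))
    ((aux_deriv lam hl 0 le_rfl).continuousAt.continuousWithinAt)
    (fun x hx => aux_deriv lam hl x (le_of_lt hx))
    (aux_integrable lam hl) htend
  rw [this]
  norm_num


lemma aux_norm_bound (lam : ℝ) (hl : 0 < lam) :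
    ∫ s in Ioi (0:ℝ), |s / (1 + s ^ 2) - 1 / (lam + s)| ≤
      5 * |Real.log lam| + 2 * Real.log 2 := by
  set f : ℝ → ℝ := fun s => s / (1 + s ^ 2) - 1 / (lam + s) with hf
  set c : ℝ := lam⁻¹ with hcdef
  have hc : 0 < c := by positivity
  have hint := aux_integrable lam hl
  have hmax : IntegrableOn (fun s => max (-(f s)) 0) (Ioi 0) volume := hint.neg.pos_part
  have heq : (fun s => |f s|) = fun s => f s + 2 * max (-(f s)) 0 := by
    funext s
    rcases le_or_gt 0 (f s) with h | h
    · rw [abs_of_nonneg h, max_eq_right (by linarith)]; ring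
    · rw [abs_of_neg h, max_eq_left (by linarith)]; ring
  have hsplit : ∫ s in Ioi (0:ℝ), |f s| =
      Real.log lam + 2 * ∫ s in Ioi (0:ℝ), max (-(f s)) 0 := by
    rw [show (fun s => |f s|) = fun s => f s + 2 * max (-(f s)) 0 from heq]
    rw [integral_add hint (hmax.const_mul 2), MeasureTheory.integral_const_mul, aux_value lam hl]
  -- bound the pos-part integral
  have hgi : IntegrableOn (fun s : ℝ => (lam + s)⁻¹) (Ioc 0 c) volume := by
    apply (ContinuousOn.integrableOn_Icc ?_).mono_set Ioc_subset_Icc_self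
    apply ContinuousOn.inv₀ (by fun_prop)
    intro x hx
    have := hx.1
    positivity
  have hzero : ∫ s in Ioi c, max (-(f s)) 0 = 0 := by
    rw [setIntegral_congr_fun measurableSet_Ioi (g := fun _ => (0:ℝ)) ?_, integral_zero]
    intro s hs
    have hs0 : (0:ℝ) < s := lt_trans hc hs
    have h2 : (0:ℝ) < 1 + s ^ 2 := by positivity
    have h3 : 0 < lam + s := by linarith
    have hfs : 0 ≤ f s := by
      rw [hf]
      simp only [sub_nonneg]
      rw [div_le_div_iff₀ h3 h2]
      have h5 : lam * c < lam * s := mul_lt_mul_of_pos_left hs hl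
      rw [hcdef, mul_inv_cancel₀ hl.ne'] at h5
      nlinarith
    simp [max_eq_right, neg_nonpos.mpr hfs]
  have hmono : ∫ s in Ioc (0:ℝ) c, max (-(f s)) 0 ≤ ∫ s in Ioc (0:ℝ) c, (lam + s)⁻¹ := by
    apply setIntegral_mono_on (hmax.mono_set Ioc_subset_Ioi_self) hgi measurableSet_Ioc
    intro s hs
    have hs0 : 0 < s := hs.1
    have h2 : (0:ℝ) < 1 + s ^ 2 := by positivity
    have h3 : 0 < lam + s := by linarith
    apply max_le _ (by positivity)
    rw [hf]
    have : 0 ≤ s / (1 + s ^ 2) := by positivity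
    have h4 : (1:ℝ)/(lam+s) = (lam+s)⁻¹ := one_div _
    simp only [neg_sub]
    linarith [le_of_eq h4]
  have hcomp : ∫ s in Ioc (0:ℝ) c, (lam + s)⁻¹ = Real.log (lam + c) - Real.log lam := by
    rw [← intervalIntegral.integral_of_le hc.le]
    have hd : ∀ x ∈ uIcc (0:ℝ) c, HasDerivAt (fun s => Real.log (lam + s)) (lam + x)⁻¹ x := by
      intro x hx
      rw [uIcc_of_le hc.le] at hx
      have h3 : 0 < lam + x := by linarith [hx.1]
      have := ((hasDerivAt_id x).const_add lam).log h3.ne'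
      simpa [one_div] using this
    rw [intervalIntegral.integral_eq_sub_of_hasDerivAt hd]
    · norm_num
    · apply ContinuousOn.intervalIntegrable
      apply ContinuousOn.inv₀ (by fun_prop)
      intro x hx
      rw [uIcc_of_le hc.le] at hx
      have := hx.1
      positivity
  have hlogb : Real.log (lam + c) - Real.log lam ≤ Real.log 2 + 2 * |Real.log lam| := by
    rcases le_total lam 1 with h1 | h1
    · have hinv1 : (1:ℝ) ≤ lam⁻¹ := (one_le_inv₀ hl).mpr h1
      have : lam + c ≤ 2 * lam⁻¹ := by
        rw [hcdef]; nlinarith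
      have hle := Real.log_le_log (by positivity) this
      rw [Real.log_mul two_ne_zero (by positivity), Real.log_inv] at hle
      have := neg_le_abs (Real.log lam)
      linarith
    · have hinv1 : lam⁻¹ ≤ lam := by
        nlinarith [mul_inv_cancel₀ hl.ne']
      have h2 : lam + c ≤ 2 * lam := by rw [hcdef]; nlinarith
      have hle := Real.log_le_log (by positivity) h2
      rw [Real.log_mul two_ne_zero hl.ne'] at hle
      have := le_abs_self (Real.log lam)
      have := abs_nonneg (Real.log lam)
      linarith
  -- combine
  have hsplit2 : ∫ s in Ioi (0:ℝ), max (-(f s)) 0 =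
      (∫ s in Ioc (0:ℝ) c, max (-(f s)) 0) + ∫ s in Ioi c, max (-(f s)) 0 := by
    rw [← setIntegral_union (Ioc_disjoint_Ioi le_rfl) measurableSet_Ioi
      (hmax.mono_set Ioc_subset_Ioi_self) (hmax.mono_set (Ioi_subset_Ioi hc.le)),
      Ioc_union_Ioi_eq_Ioi hc.le]
  have hub : ∫ s in Ioi (0:ℝ), max (-(f s)) 0 ≤ Real.log 2 + 2 * |Real.log lam| := by
    rw [hsplit2, hzero, add_zero]
    exact hmono.trans (hcomp ▸ hlogb)
  have := le_abs_self (Real.log lam)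
  rw [hsplit]
  linarith

end TreeEntropyAux

theorem tree_entropy_resistance_representation (μ : Measure ℝ) [IsProbabilityMeasure μ]
    (hsupp : μ (Iio 0) = 0) (hzero : μ {0} = 0)
    (hlog : Integrable (fun lam : ℝ => Real.log lam) μ) :
    IntegrableOn (fun s : ℝ => s / (1 + s ^ 2) - ∫ lam, 1 / (lam + s) ∂μ) (Ioi 0) volume ∧
    ∫ s in Ioi (0 : ℝ), (s / (1 + s ^ 2) - ∫ lam, 1 / (lam + s) ∂μ) =
      ∫ lam, Real.log lam ∂μ := by
  set ν : Measure ℝ := volume.restrict (Ioi 0) with hν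
  have hae : ∀ᵐ lam ∂μ, 0 < lam := by
    have h0 : μ (Iic 0) = 0 := by
      rw [← Iio_union_right]; exact measure_union_null hsupp hzero
    rw [ae_iff]
    have hset : {lam : ℝ | ¬ 0 < lam} = Iic 0 := by ext x; simp
    rw [hset]; exact h0
  have hmeasF : AEStronglyMeasurable
      (Function.uncurry fun lam s : ℝ => s / (1 + s ^ 2) - 1 / (lam + s)) (μ.prod ν) := by
    apply Measurable.aestronglyMeasurable
    unfold Function.uncurry
    fun_prop
  have hprod : Integrable
      (Function.uncurry fun lam s : ℝ => s / (1 + s ^ 2) - 1 / (lam + s)) (μ.prod ν) := by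
    rw [MeasureTheory.integrable_prod_iff hmeasF]
    constructor
    · filter_upwards [hae] with lam hlam
      exact aux_integrable lam hlam
    · apply Integrable.mono' ((hlog.abs.const_mul 5).add (integrable_const (2 * Real.log 2)))
      · exact hmeasF.norm.integral_prod_right'
      · filter_upwards [hae] with lam hlam
        rw [Real.norm_eq_abs, abs_of_nonneg (integral_nonneg fun s => norm_nonneg _)]
        have := aux_norm_bound lam hlam
        simpa [Real.norm_eq_abs] using this
  have hinv : ∀ s ∈ Ioi (0:ℝ), Integrable (fun lam : ℝ => 1 / (lam + s)) μ := by
    intro s hs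
    have hs0 : (0:ℝ) < s := hs
    apply Integrable.mono' (integrable_const (1/s))
      (Measurable.aestronglyMeasurable (by fun_prop))
    filter_upwards [hae] with lam hlam
    rw [Real.norm_eq_abs, abs_of_pos (by positivity)]
    apply one_div_le_one_div_of_le hs0
    linarith
  have hcongr : ∀ s ∈ Ioi (0:ℝ),
      ∫ lam, (s / (1 + s ^ 2) - 1 / (lam + s)) ∂μ
        = s / (1 + s ^ 2) - ∫ lam, 1 / (lam + s) ∂μ := by
    intro s hs
    rw [integral_sub (integrable_const _) (hinv s hs), integral_const]
    simp
  have haes : ∀ᵐ s ∂ν, ∫ lam, (s / (1 + s ^ 2) - 1 / (lam + s)) ∂μ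
      = s / (1 + s ^ 2) - ∫ lam, 1 / (lam + s) ∂μ := by
    filter_upwards [ae_restrict_mem measurableSet_Ioi] with s hs
    exact hcongr s hs
  constructor
  · have h1 : Integrable (fun s => ∫ lam, (s / (1 + s ^ 2) - 1 / (lam + s)) ∂μ) ν :=
      hprod.swap.integral_prod_left
    exact h1.congr haes
  · have hswap := MeasureTheory.integral_integral_swap hprod
    have hL : ∫ lam, ∫ s, (s / (1 + s ^ 2) - 1 / (lam + s)) ∂ν ∂μ
        = ∫ lam, Real.log lam ∂μ := by
      apply integral_congr_ae
      filter_upwards [hae] with lam hlam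
      exact aux_value lam hlam
    have hR : ∫ s, ∫ lam, (s / (1 + s ^ 2) - 1 / (lam + s)) ∂μ ∂ν
        = ∫ s in Ioi (0:ℝ), (s / (1 + s ^ 2) - ∫ lam, 1 / (lam + s) ∂μ) :=
      integral_congr_ae haes
    rw [← hR, ← hswap, hL]
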